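/- Let H ⊗_k k[t_1,…,t_k] be as above and let I be the ideal generated by the single element e = Π_{j=1}^k(t_j + α_j) with α_j ∈ H of positive degree (nilpotent). Then the quotient (H ⊗ k[t_1,…,t_k])/I is a free H-module, and the exact sequence 0 → H⊗k[t] →^{·e} H⊗k[t] → (H⊗k[t])/I → 0 holds, i.e. e is a regular element. -/

import Mathlib

open MvPolynomial

section Aux

open Finsupp

variable {H : Type*} [CommRing H] {k : ℕ}

/-- The `H`-algebra automorphism of `H[t_1,…,t_k]` sending `t_j ↦ t_j + α_j`. -/
noncomputable def shiftEquiv' (α : Fin k → H) :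
    MvPolynomial (Fin k) H ≃ₐ[H] MvPolynomial (Fin k) H :=
  AlgEquiv.ofAlgHom (aeval fun j => X j + C (α j)) (aeval fun j => X j - C (α j))
    (by ext i : 2; simp) (by ext i : 2; simp)

lemma mem_span_monomial_iff' (m : Fin k →₀ ℕ) (p : MvPolynomial (Fin k) H) :
    p ∈ Ideal.span {monomial m (1:H)} ↔ ∀ d, ¬ m ≤ d → coeff d p = 0 := by
  rw [Ideal.mem_span_singleton, monomial_one_dvd_iff_modMonomial_eq_zero]
  constructor
  · intro h d hd
    rw [← coeff_modMonomial_of_not_le p hd, h, coeff_zero]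
  · intro h
    ext d
    by_cases hd : m ≤ d
    · simp [coeff_modMonomial_of_le p hd]
    · simp [coeff_modMonomial_of_not_le p hd, h d hd]

/-- Restriction of coefficients to the exponents not divisible by `m`. -/
noncomputable def resMap' (m : Fin k →₀ ℕ) :
    MvPolynomial (Fin k) H →ₗ[H] ({d : Fin k →₀ ℕ // ¬ m ≤ d} →₀ H) :=
  (Finsupp.lsubtypeDomain (M := H) (R := H) {d | ¬ m ≤ d}).comp
    ((basisMonomials (Fin k) H).repr : MvPolynomial (Fin k) H →ₗ[H] _)

lemma resMap'_surj (m : Fin k →₀ ℕ) : Function.Surjective (resMap' (H := H) m) := by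
  intro g
  refine ⟨(basisMonomials (Fin k) H).repr.symm (g.extendDomain), ?_⟩
  show Finsupp.subtypeDomain _ ((basisMonomials (Fin k) H).repr
    ((basisMonomials (Fin k) H).repr.symm g.extendDomain)) = g
  rw [LinearEquiv.apply_symm_apply]
  exact Finsupp.subtypeDomain_extendDomain g

lemma ker_resMap' (m : Fin k →₀ ℕ) :
    LinearMap.ker (resMap' (H := H) m)
      = (Ideal.span {monomial m (1:H)}).restrictScalars H := by
  ext p
  rw [Submodule.restrictScalars_mem, mem_span_monomial_iff', LinearMap.mem_ker]
  show Finsupp.subtypeDomain _ _ = 0 ↔ _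
  rw [Finsupp.subtypeDomain_eq_zero_iff']
  rfl

lemma prod_X_eq_monomial' (s : Finset (Fin k)) :
    (∏ j ∈ s, X j : MvPolynomial (Fin k) H)
      = monomial (∑ j ∈ s, Finsupp.single j 1) 1 := by
  classical
  induction s using Finset.induction with
  | empty => simp
  | insert _ _ h ih =>
      rw [Finset.prod_insert h, Finset.sum_insert h, ih, X, monomial_mul, one_mul]

end Aux

/-- With `e = Π_j (t_j + α_j)`, `α_j ∈ H` nilpotent, the element `e` is regular
(multiplication by `e` is injective, giving the short exact sequence
`0 → H[t] → H[t] → H[t]/(e) → 0`), and the quotient `H[t]/(e)` is a free `H`-module. -/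
theorem stmt_14 {H : Type*} [CommRing H] (k : ℕ) (α : Fin k → H)
    (hα : ∀ j, IsNilpotent (α j)) :
    Function.Injective (fun p : MvPolynomial (Fin k) H =>
      (∏ j : Fin k, (X j + C (α j))) * p) ∧
    Function.Surjective (Ideal.Quotient.mk
      (Ideal.span {∏ j : Fin k, (X j + C (α j))} : Ideal (MvPolynomial (Fin k) H))) ∧
    Module.Free H (MvPolynomial (Fin k) H ⧸
      (Ideal.span {∏ j : Fin k, (X j + C (α j))} : Ideal (MvPolynomial (Fin k) H))) := by
  set m : Fin k →₀ ℕ := ∑ j : Fin k, Finsupp.single j 1 with hm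
  set e : MvPolynomial (Fin k) H := ∏ j : Fin k, (X j + C (α j)) with he
  have hφ : shiftEquiv' α (monomial m 1) = e := by
    rw [← prod_X_eq_monomial' Finset.univ, map_prod]
    simp [shiftEquiv', he]
  refine ⟨?_, Ideal.Quotient.mk_surjective, ?_⟩
  · intro p q h
    have h' : (shiftEquiv' α).symm (e * p) = (shiftEquiv' α).symm (e * q) := congrArg _ h
    rw [map_mul, map_mul, ← hφ, AlgEquiv.symm_apply_apply] at h'
    have := congrArg (fun x => MvPolynomial.divMonomial x m) h'
    simpa only [divMonomial_monomial_mul, EmbeddingLike.apply_eq_iff_eq] using this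
  · have hmap : Ideal.span {e} =
        Ideal.map ((shiftEquiv' α : MvPolynomial (Fin k) H ≃ₐ[H] _) :
          MvPolynomial (Fin k) H →+* MvPolynomial (Fin k) H)
          (Ideal.span {monomial m (1:H)}) := by
      rw [Ideal.map_span, Set.image_singleton]
      exact congrArg (fun x => Ideal.span {x}) hφ.symm
    let eq1 := Ideal.quotientEquivAlg (Ideal.span {monomial m (1:H)}) (Ideal.span {e})
      (shiftEquiv' α) hmap
    let eq2 := Submodule.Quotient.restrictScalarsEquiv H
      (Ideal.span {monomial m (1:H)} : Ideal (MvPolynomial (Fin k) H))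
    let eq3 := Submodule.quotEquivOfEq _ _ (ker_resMap' (H := H) m)
    let eq4 := (resMap' (H := H) m).quotKerEquivOfSurjective (resMap'_surj m)
    exact Module.Free.of_equiv (eq4.symm.trans (eq3.trans (eq2.trans eq1.toLinearEquiv)))
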